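/- Let q > 1, Δt > 0, a mesh size h > 0, an integer M_x ≥ 1, nonnegative symmetric summable weights (w_j)_{j≠0}, initial data u⁰ supported in {|i| ≤ M_x}, and let (uⁿ)_{n∈ℕ} be the solution of the fully discrete implicit scheme (FD). Then for every n ∈ ℕ, (4/(q q')) ∑_{i∈ℤ} h ((u^{n+1}_i)^{q/2} − (uⁿ_i)^{q/2})² / Δt² + (1/2) (‖u^{n+1}‖_X² − ‖uⁿ‖_X²)/Δt ≤ 0; in particular the sequence (‖uⁿ‖_X)_{n∈ℕ} is nonincreasing. -/

import Mathlib

open scoped BigOperators ENNReal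

noncomputable def opow (x r : ℝ) : ℝ := |x| ^ (r - 1) * x

noncomputable def discLap (w u : ℤ → ℝ) (i : ℤ) : ℝ :=
  ∑' j : ℤ, if j = 0 then 0 else w j * (u i - u (i - j))

noncomputable def lqNorm (h q : ℝ) (u : ℤ → ℝ) : ℝ :=
  (∑' i : ℤ, h * |u i| ^ q) ^ (1 / q)

noncomputable def energyNorm (h : ℝ) (w u : ℤ → ℝ) : ℝ :=
  Real.sqrt ((1 / 2) * ∑' i : ℤ, ∑' j : ℤ, if j = 0 then 0 else h * w j * (u i - u (i - j)) ^ 2)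

/-- The fully discrete implicit scheme (FD). -/
def IsFD (q Δt : ℝ) (w : ℤ → ℝ) (Mx : ℤ) (u0 : ℤ → ℝ) (u : ℕ → ℤ → ℝ) : Prop :=
  u 0 = u0 ∧
  (∀ n : ℕ, ∀ i : ℤ, Mx < |i| → u n i = 0) ∧
  (∀ n : ℕ, ∀ i : ℤ, |i| ≤ Mx →
    (opow (u (n + 1) i) (q - 1) - opow (u n i) (q - 1)) / Δt + discLap w (u (n + 1)) i = 0)

/-- A solution of the semi-discrete scheme (SD) with initial data `u0`. -/
def IsSD (q : ℝ) (w : ℤ → ℝ) (Mx : ℤ) (u0 : ℤ → ℝ) (v : ℤ → ℝ → ℝ) : Prop :=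
  (∀ i : ℤ, ContinuousOn (v i) (Set.Ici 0)) ∧
  (∀ i : ℤ, Mx < |i| → ∀ t : ℝ, 0 ≤ t → v i t = 0) ∧
  (∀ i : ℤ, v i 0 = u0 i) ∧
  (∀ i : ℤ, |i| ≤ Mx → ∀ t : ℝ, 0 ≤ t →
    opow (v i t) (q - 1) = opow (u0 i) (q - 1) - ∫ s in (0:ℝ)..t, discLap w (fun k => v k s) i)

/-- `C` satisfies the discrete Poincaré–Sobolev inequality for exponent `q`. -/
def PSConst (h q C : ℝ) (w : ℤ → ℝ) (Mx : ℤ) : Prop :=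
  ∀ f : ℤ → ℝ, (∀ i : ℤ, Mx < |i| → f i = 0) → lqNorm h q f ≤ C * energyNorm h w f

open MeasureTheory intervalIntegral

lemma L00 (r s u : ℝ) (hr : 0 < r) (hs : 0 < s) (hrs : r + s = 2)
    (hu0 : 0 < u) (hu1 : u < 1) :
    r * s * (1 - u) ^ 2 ≤ (1 - u ^ r) * (1 - u ^ s) := by
  set I : Set ℝ := Set.Ioc u 1 with hI
  set μ := volume.restrict I with hμ
  set f : ℝ → ℝ := fun t => t ^ (r - 1) with hf
  set g : ℝ → ℝ := fun t => t ^ (s - 1) with hg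
  have hu1' : u ≤ 1 := hu1.le
  have hfi : IntegrableOn f I := by
    have := (intervalIntegral.intervalIntegrable_rpow' (a := u) (b := 1)
      (r := r - 1) (by linarith)).1
    simpa [hI, hf] using this
  have hgi : IntegrableOn g I := by
    have := (intervalIntegral.intervalIntegrable_rpow' (a := u) (b := 1)
      (r := s - 1) (by linarith)).1
    simpa [hI, hg] using this
  have hintf : ∫ t, f t ∂μ = (1 - u ^ r) / r := by
    have h1 : ∫ t in u..1, t ^ (r - 1) = ((1:ℝ) ^ (r - 1 + 1) - u ^ (r - 1 + 1)) / (r - 1 + 1) :=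
      integral_rpow (Or.inl (by linarith))
    rw [hμ, hI, ← intervalIntegral.integral_of_le hu1', hf]
    rw [h1]
    norm_num
  have hintg : ∫ t, g t ∂μ = (1 - u ^ s) / s := by
    have h1 : ∫ t in u..1, t ^ (s - 1) = ((1:ℝ) ^ (s - 1 + 1) - u ^ (s - 1 + 1)) / (s - 1 + 1) :=
      integral_rpow (Or.inl (by linarith))
    rw [hμ, hI, ← intervalIntegral.integral_of_le hu1', hg]
    rw [h1]
    norm_num
  have hfg : Integrable (fun p : ℝ × ℝ => f p.1 * g p.2) (μ.prod μ) := Integrable.mul_prod hfi hgi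
  have hgf : Integrable (fun p : ℝ × ℝ => g p.1 * f p.2) (μ.prod μ) := Integrable.mul_prod hgi hfi
  have hF : Integrable (fun p : ℝ × ℝ => (f p.1 * g p.2 + g p.1 * f p.2) / 2) (μ.prod μ) := by
    simpa [add_div] using (hfg.add hgf).div_const 2
  have hμfin : μ Set.univ < ⊤ := by
    rw [hμ, Measure.restrict_apply_univ, hI, Real.volume_Ioc]
    exact ENNReal.ofReal_lt_top
  haveI : IsFiniteMeasure μ := ⟨hμfin⟩
  have h1int : Integrable (fun _ : ℝ × ℝ => (1:ℝ)) (μ.prod μ) := integrable_const 1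
  have hmono : ∫ _ : ℝ × ℝ, (1:ℝ) ∂μ.prod μ ≤ ∫ p : ℝ × ℝ, (f p.1 * g p.2 + g p.1 * f p.2) / 2 ∂μ.prod μ := by
    refine integral_mono_ae h1int hF ?_
    rw [hμ, Measure.prod_restrict]
    refine (ae_restrict_iff' (measurableSet_Ioc.prod measurableSet_Ioc)).2 ?_
    filter_upwards with p hp
    obtain ⟨⟨hp1, hp1'⟩, hp2, hp2'⟩ := hp
    have ht : 0 < p.1 := lt_trans hu0 hp1
    have hτ : 0 < p.2 := lt_trans hu0 hp2
    have hprod : (f p.1 * g p.2) * (g p.1 * f p.2) = 1 := by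
      have : f p.1 * g p.2 * (g p.1 * f p.2) = p.1 ^ (r - 1 + (s - 1)) * p.2 ^ (s - 1 + (r - 1)) := by
        rw [Real.rpow_add ht, Real.rpow_add hτ, hf, hg]; ring
      rw [this]
      have : r - 1 + (s - 1) = 0 := by linarith
      rw [this, show s - 1 + (r - 1) = 0 by linarith, Real.rpow_zero, Real.rpow_zero, mul_one]
    have hx : 0 < f p.1 * g p.2 :=
      mul_pos (Real.rpow_pos_of_pos ht _) (Real.rpow_pos_of_pos hτ _)
    nlinarith [sq_nonneg (f p.1 * g p.2 - 1)]
  have hvol : ∫ _ : ℝ × ℝ, (1:ℝ) ∂μ.prod μ = (1 - u) ^ 2 := by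
    rw [MeasureTheory.integral_const, smul_eq_mul, mul_one]
    have : (μ.prod μ) Set.univ = ENNReal.ofReal (1 - u) * ENNReal.ofReal (1 - u) := by
      rw [show (Set.univ : Set (ℝ × ℝ)) = Set.univ ×ˢ Set.univ from (Set.univ_prod_univ).symm,
        Measure.prod_prod, hμ, Measure.restrict_apply_univ, hI, Real.volume_Ioc]
    rw [measureReal_def, this, ← ENNReal.ofReal_mul (by linarith)]
    rw [ENNReal.toReal_ofReal (by nlinarith)]
    ring
  have hFval : ∫ p : ℝ × ℝ, (f p.1 * g p.2 + g p.1 * f p.2) / 2 ∂μ.prod μ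
      = ((1 - u ^ r) / r) * ((1 - u ^ s) / s) := by
    rw [MeasureTheory.integral_div, MeasureTheory.integral_add hfg hgf, integral_prod_mul, integral_prod_mul,
      hintf, hintg]
    ring
  rw [hvol, hFval] at hmono
  have h2 : (1 - u) ^ 2 * (r * s) ≤ ((1 - u ^ r) / r) * ((1 - u ^ s) / s) * (r * s) :=
    mul_le_mul_of_nonneg_right hmono (by positivity)
  calc r * s * (1 - u) ^ 2 = (1 - u) ^ 2 * (r * s) := by ring
    _ ≤ ((1 - u ^ r) / r) * ((1 - u ^ s) / s) * (r * s) := h2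
    _ = (1 - u ^ r) * (1 - u ^ s) := by field_simp

lemma opow_zero' (r : ℝ) : opow 0 r = 0 := by simp [opow]

lemma opow_neg' (x r : ℝ) : opow (-x) r = -opow x r := by simp only [opow, abs_neg]; ring

lemma opow_of_nonneg {x : ℝ} (hx : 0 ≤ x) {r : ℝ} (hr : 0 < r) : opow x r = x ^ r := by
  rcases eq_or_lt_of_le hx with h | h
  · rw [← h, opow_zero', Real.zero_rpow hr.ne']
  · rw [opow, abs_of_pos h, ← Real.rpow_add_one h.ne']
    norm_num

-- nonneg, ordered case
lemma key_le {q : ℝ} (hq : 1 < q) {x y : ℝ} (hy : 0 ≤ y) (hxy : y ≤ x) :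
    4 * (q - 1) / q ^ 2 * (x ^ (q / 2) - y ^ (q / 2)) ^ 2
      ≤ (x ^ (q - 1) - y ^ (q - 1)) * (x - y) := by
  have hq0 : 0 < q := by linarith
  have hx : 0 ≤ x := le_trans hy hxy
  have hc1 : 4 * (q - 1) / q ^ 2 ≤ 1 := by
    rw [div_le_one (by positivity)]; nlinarith [sq_nonneg (q - 2)]
  have hc0 : 0 ≤ 4 * (q - 1) / q ^ 2 := by apply div_nonneg (by linarith) (by positivity)
  rcases eq_or_lt_of_le hxy with rfl | hlt
  · simp
  rcases eq_or_lt_of_le hy with rfl | hy0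
  · -- y = 0
    have hx0 : 0 < x := hlt
    rw [Real.zero_rpow (by positivity : q / 2 ≠ 0), Real.zero_rpow (by linarith : q - 1 ≠ 0)]
    have hxq : (x ^ (q / 2) - 0) ^ 2 = x ^ (q - 1) * x := by
      rw [sub_zero, ← Real.rpow_natCast (x ^ (q/2)) 2, ← Real.rpow_mul hx,
        show q / 2 * (2:ℕ) = (q - 1) + 1 by push_cast; ring, Real.rpow_add_one hx0.ne']
    rw [hxq, sub_zero]
    calc 4 * (q-1) / q^2 * (x ^ (q-1) * x) ≤ 1 * (x ^ (q-1) * x) := by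
          apply mul_le_mul_of_nonneg_right hc1
          have := Real.rpow_nonneg hx (q - 1); positivity
      _ = x ^ (q-1) * (x - 0) := by ring
  · -- 0 < y < x
    have hx0 : 0 < x := lt_trans hy0 hlt
    set u : ℝ := y / x with hu
    have hu0 : 0 < u := div_pos hy0 hx0
    have hu1 : u < 1 := (div_lt_one hx0).2 hlt
    set r : ℝ := 2 * (q - 1) / q with hr
    set s : ℝ := 2 / q with hs
    have hrpos : 0 < r := by apply div_pos; linarith; linarith
    have hspos : 0 < s := by positivity
    have hrs : r + s = 2 := by rw [hr, hs]; field_simp; ring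
    set v : ℝ := u ^ (q / 2) with hv
    have hv0 : 0 < v := Real.rpow_pos_of_pos hu0 _
    have hv1 : v < 1 := Real.rpow_lt_one hu0.le hu1 (by positivity)
    have h00 := L00 r s v hrpos hspos hrs hv0 hv1
    have hvr : v ^ r = u ^ (q - 1) := by
      rw [hv, ← Real.rpow_mul hu0.le]
      congr 1
      rw [hr]; field_simp
    have hvs : v ^ s = u := by
      rw [hv, ← Real.rpow_mul hu0.le]
      rw [show q / 2 * s = 1 by rw [hs]; field_simp, Real.rpow_one]
    rw [hvr, hvs] at h00
    have hrsval : r * s = 4 * (q - 1) / q ^ 2 := by rw [hr, hs]; field_simp; ring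
    rw [hrsval] at h00
    -- now scale by x^q
    have hy_eq : y = x * u := by rw [hu, mul_comm, div_mul_cancel₀ y hx0.ne']
    have hyq2 : y ^ (q / 2) = x ^ (q / 2) * u ^ (q / 2) := by
      rw [hy_eq, Real.mul_rpow hx0.le hu0.le]
    have hyq1 : y ^ (q - 1) = x ^ (q - 1) * u ^ (q - 1) := by
      rw [hy_eq, Real.mul_rpow hx0.le hu0.le]
    have hxq : x ^ (q / 2) * x ^ (q / 2) = x ^ (q - 1) * x := by
      rw [← Real.rpow_add hx0, show q / 2 + q / 2 = (q - 1) + 1 by ring,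
        Real.rpow_add_one hx0.ne']
    have hmul := mul_le_mul_of_nonneg_left h00 (le_of_lt (Real.rpow_pos_of_pos hx0 q))
    have hxqq : x ^ q = x ^ (q / 2) * x ^ (q / 2) := by
      rw [← Real.rpow_add hx0]; norm_num
    calc 4 * (q - 1) / q ^ 2 * (x ^ (q / 2) - y ^ (q / 2)) ^ 2
        = x ^ q * (4 * (q - 1) / q ^ 2 * (1 - u ^ (q / 2)) ^ 2) := by
          rw [hyq2, hxqq]; ring
      _ ≤ x ^ q * ((1 - u ^ (q - 1)) * (1 - u)) := hmul
      _ = (x ^ (q - 1) - y ^ (q - 1)) * (x - y) := by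
          rw [hxqq, hyq1, hy_eq]
          linear_combination ((1 - u ^ (q - 1)) * (1 - u)) * hxq

lemma key_mixed {q : ℝ} (hq : 1 < q) {x y : ℝ} (hx : 0 ≤ x) (hy : 0 ≤ y) :
    4 * (q - 1) / q ^ 2 * (x ^ (q / 2) + y ^ (q / 2)) ^ 2
      ≤ (x ^ (q - 1) + y ^ (q - 1)) * (x + y) := by
  have hq0 : 0 < q := by linarith
  have hc1 : 4 * (q - 1) / q ^ 2 ≤ 1 := by
    rw [div_le_one (by positivity)]; nlinarith [sq_nonneg (q - 2)]
  have hc0 : 0 ≤ 4 * (q - 1) / q ^ 2 := div_nonneg (by linarith) (by positivity)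
  have hsq : ∀ z : ℝ, 0 ≤ z → (z ^ (q / 2)) ^ 2 = z ^ (q - 1) * z := by
    intro z hz
    rcases eq_or_lt_of_le hz with rfl | hz0
    · rw [Real.zero_rpow (by positivity : q / 2 ≠ 0),
        Real.zero_rpow (by linarith : q - 1 ≠ 0)]
      ring
    · rw [← Real.rpow_natCast (z ^ (q/2)) 2, ← Real.rpow_mul hz,
        show q / 2 * (2:ℕ) = (q - 1) + 1 by push_cast; ring, Real.rpow_add_one hz0.ne']
  have hcross : 2 * (x ^ (q / 2) * y ^ (q / 2)) ≤ x ^ (q - 1) * y + y ^ (q - 1) * x := by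
    rcases eq_or_lt_of_le hx with rfl | hx0
    · rw [Real.zero_rpow (by positivity : q / 2 ≠ 0),
        Real.zero_rpow (by linarith : q - 1 ≠ 0)]
      simp
    rcases eq_or_lt_of_le hy with rfl | hy0
    · rw [Real.zero_rpow (by positivity : q / 2 ≠ 0),
        Real.zero_rpow (by linarith : q - 1 ≠ 0)]
      simp
    · set α : ℝ := x ^ ((q - 1) / 2) * y ^ ((1:ℝ) / 2) with hα
      set β : ℝ := x ^ ((1:ℝ) / 2) * y ^ ((q - 1) / 2) with hβ
      have hαβ : α * β = x ^ (q / 2) * y ^ (q / 2) := by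
        rw [hα, hβ]
        rw [show x ^ ((q-1)/2) * y ^ ((1:ℝ)/2) * (x ^ ((1:ℝ)/2) * y ^ ((q-1)/2))
            = (x ^ ((q-1)/2) * x ^ ((1:ℝ)/2)) * (y ^ ((1:ℝ)/2) * y ^ ((q-1)/2)) by ring,
          ← Real.rpow_add hx0, ← Real.rpow_add hy0]
        norm_num
        rw [show (q-1)/2 + 1/2 = q / 2 by ring, show 1/2 + (q-1)/2 = q/2 by ring]
      have hα2 : α ^ 2 = x ^ (q - 1) * y := by
        rw [hα, mul_pow, ← Real.rpow_natCast (x ^ ((q-1)/2)) 2, ← Real.rpow_mul hx,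
          ← Real.rpow_natCast (y ^ ((1:ℝ)/2)) 2, ← Real.rpow_mul hy]
        norm_num
      have hβ2 : β ^ 2 = y ^ (q - 1) * x := by
        rw [hβ, mul_pow, ← Real.rpow_natCast (x ^ ((1:ℝ)/2)) 2, ← Real.rpow_mul hx,
          ← Real.rpow_natCast (y ^ ((q-1)/2)) 2, ← Real.rpow_mul hy]
        norm_num
        ring
      calc 2 * (x ^ (q/2) * y ^ (q/2)) = 2 * α * β := by rw [← hαβ]; ring
        _ ≤ α ^ 2 + β ^ 2 := two_mul_le_add_sq α β
        _ = x ^ (q - 1) * y + y ^ (q - 1) * x := by rw [hα2, hβ2]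
  have hexp : (x ^ (q / 2) + y ^ (q / 2)) ^ 2 ≤ (x ^ (q - 1) + y ^ (q - 1)) * (x + y) := by
    have h1 := hsq x hx
    have h2 := hsq y hy
    nlinarith [Real.rpow_nonneg hx (q-1), Real.rpow_nonneg hy (q-1)]
  calc 4 * (q - 1) / q ^ 2 * (x ^ (q / 2) + y ^ (q / 2)) ^ 2
      ≤ 1 * (x ^ (q / 2) + y ^ (q / 2)) ^ 2 := by
        apply mul_le_mul_of_nonneg_right hc1 (sq_nonneg _)
    _ ≤ (x ^ (q - 1) + y ^ (q - 1)) * (x + y) := by rw [one_mul]; exact hexp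

lemma key_general {q : ℝ} (hq : 1 < q) (a b : ℝ) :
    4 * (q - 1) / q ^ 2 * (opow a (q / 2) - opow b (q / 2)) ^ 2
      ≤ (opow a (q - 1) - opow b (q - 1)) * (a - b) := by
  have hq2 : (0:ℝ) < q / 2 := by linarith
  have hq1 : (0:ℝ) < q - 1 := by linarith
  -- symmetric helper for nonneg pairs in any order
  have keynn : ∀ x y : ℝ, 0 ≤ x → 0 ≤ y →
      4 * (q - 1) / q ^ 2 * (x ^ (q / 2) - y ^ (q / 2)) ^ 2
        ≤ (x ^ (q - 1) - y ^ (q - 1)) * (x - y) := by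
    intro x y hx hy
    rcases le_total y x with hxy | hxy
    · exact key_le hq hy hxy
    · have := key_le hq hx hxy
      calc 4 * (q - 1) / q ^ 2 * (x ^ (q / 2) - y ^ (q / 2)) ^ 2
          = 4 * (q - 1) / q ^ 2 * (y ^ (q / 2) - x ^ (q / 2)) ^ 2 := by ring
        _ ≤ (y ^ (q - 1) - x ^ (q - 1)) * (y - x) := this
        _ = (x ^ (q - 1) - y ^ (q - 1)) * (x - y) := by ring
  rcases le_total 0 a with ha | ha <;> rcases le_total 0 b with hb | hb
  · rw [opow_of_nonneg ha hq2, opow_of_nonneg hb hq2,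
      opow_of_nonneg ha hq1, opow_of_nonneg hb hq1]
    exact keynn a b ha hb
  · -- a ≥ 0, b ≤ 0
    have hb' : 0 ≤ -b := by linarith
    have e1 : opow b (q / 2) = -((-b) ^ (q / 2)) := by
      rw [← opow_of_nonneg hb' hq2, ← opow_neg', neg_neg]
    have e2 : opow b (q - 1) = -((-b) ^ (q - 1)) := by
      rw [← opow_of_nonneg hb' hq1, ← opow_neg', neg_neg]
    rw [opow_of_nonneg ha hq2, opow_of_nonneg ha hq1, e1, e2]
    have := key_mixed hq ha hb'
    calc 4 * (q - 1) / q ^ 2 * (a ^ (q / 2) - -(-b) ^ (q / 2)) ^ 2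
        = 4 * (q - 1) / q ^ 2 * (a ^ (q / 2) + (-b) ^ (q / 2)) ^ 2 := by ring
      _ ≤ (a ^ (q - 1) + (-b) ^ (q - 1)) * (a + -b) := this
      _ = (a ^ (q - 1) - -(-b) ^ (q - 1)) * (a - b) := by ring
  · -- a ≤ 0, b ≥ 0
    have ha' : 0 ≤ -a := by linarith
    have e1 : opow a (q / 2) = -((-a) ^ (q / 2)) := by
      rw [← opow_of_nonneg ha' hq2, ← opow_neg', neg_neg]
    have e2 : opow a (q - 1) = -((-a) ^ (q - 1)) := by
      rw [← opow_of_nonneg ha' hq1, ← opow_neg', neg_neg]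
    rw [opow_of_nonneg hb hq2, opow_of_nonneg hb hq1, e1, e2]
    have := key_mixed hq ha' hb
    calc 4 * (q - 1) / q ^ 2 * (-(-a) ^ (q / 2) - b ^ (q / 2)) ^ 2
        = 4 * (q - 1) / q ^ 2 * ((-a) ^ (q / 2) + b ^ (q / 2)) ^ 2 := by ring
      _ ≤ ((-a) ^ (q - 1) + b ^ (q - 1)) * (-a + b) := this
      _ = (-(-a) ^ (q - 1) - b ^ (q - 1)) * (a - b) := by ring
  · -- both ≤ 0
    have ha' : 0 ≤ -a := by linarith
    have hb' : 0 ≤ -b := by linarith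
    have e1 : opow a (q / 2) = -((-a) ^ (q / 2)) := by
      rw [← opow_of_nonneg ha' hq2, ← opow_neg', neg_neg]
    have e2 : opow a (q - 1) = -((-a) ^ (q - 1)) := by
      rw [← opow_of_nonneg ha' hq1, ← opow_neg', neg_neg]
    have e3 : opow b (q / 2) = -((-b) ^ (q / 2)) := by
      rw [← opow_of_nonneg hb' hq2, ← opow_neg', neg_neg]
    have e4 : opow b (q - 1) = -((-b) ^ (q - 1)) := by
      rw [← opow_of_nonneg hb' hq1, ← opow_neg', neg_neg]
    rw [e1, e2, e3, e4]
    have := keynn (-b) (-a) hb' ha'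
    calc 4 * (q - 1) / q ^ 2 * (-(-a) ^ (q / 2) - -(-b) ^ (q / 2)) ^ 2
        = 4 * (q - 1) / q ^ 2 * ((-b) ^ (q / 2) - (-a) ^ (q / 2)) ^ 2 := by ring
      _ ≤ ((-b) ^ (q - 1) - (-a) ^ (q - 1)) * (-b - -a) := this
      _ = (-(-a) ^ (q - 1) - -(-b) ^ (q - 1)) * (a - b) := by ring

noncomputable def Aform (w f g : ℤ → ℝ) (p : ℤ × ℤ) : ℝ :=
  if p.2 = 0 then 0 else w p.2 * (f p.1 - f (p.1 - p.2)) * g p.1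

noncomputable def symform (w f g : ℤ → ℝ) (p : ℤ × ℤ) : ℝ :=
  if p.2 = 0 then 0 else w p.2 * (f p.1 - f (p.1 - p.2)) * (g p.1 - g (p.1 - p.2))

def emap : ℤ × ℤ ≃ ℤ × ℤ where
  toFun p := (p.1 - p.2, -p.2)
  invFun p := (p.1 - p.2, -p.2)
  left_inv p := by simp [Prod.ext_iff]
  right_inv p := by simp [Prod.ext_iff]

section sums

variable {w f g : ℤ → ℝ} {S : Finset ℤ}

lemma summable_slice_abs (hw0 : ∀ j : ℤ, 0 ≤ w j) (hwsum : Summable w)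
    (hf : ∀ i ∉ S, f i = 0) (i : ℤ) :
    Summable fun j : ℤ => |Aform w f g (i, j)| := by
  have hbound : ∀ j : ℤ,
      |Aform w f g (i, j)| ≤
        ((if j = 0 then 0 else w j * |f i|) + (if j = 0 then 0 else w j * |f (i - j)|)) * |g i| := by
    intro j
    by_cases hj : j = 0
    · simp [Aform, hj]
    · simp only [Aform, hj, if_false]
      rw [abs_mul, abs_mul, abs_of_nonneg (hw0 j)]
      apply mul_le_mul_of_nonneg_right _ (abs_nonneg _)
      rw [← mul_add]
      exact mul_le_mul_of_nonneg_left (abs_sub _ _) (hw0 j)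
  have hs1 : Summable fun j : ℤ => (if j = 0 then 0 else w j * |f i|) := by
    apply Summable.of_nonneg_of_le (fun j => ?_) (fun j => ?_) (hwsum.mul_right |f i|)
    · by_cases hj : j = 0
      · simp [hj]
      · simp only [hj, if_false]; exact mul_nonneg (hw0 j) (abs_nonneg _)
    · by_cases hj : j = 0
      · simp only [hj, if_true]; exact mul_nonneg (hw0 0) (abs_nonneg _)
      · simp [hj]
  have hs2 : Summable fun j : ℤ => (if j = 0 then 0 else w j * |f (i - j)|) := by
    apply summable_of_ne_finset_zero (s := S.image (fun k => i - k))
    intro j hj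
    by_cases hj0 : j = 0
    · simp [hj0]
    · simp only [hj0, if_false]
      have : f (i - j) = 0 := by
        apply hf
        intro hmem
        exact hj (Finset.mem_image.2 ⟨i - j, hmem, by ring⟩)
      simp [this]
  have hbsum : Summable fun j : ℤ =>
      ((if j = 0 then 0 else w j * |f i|) + (if j = 0 then 0 else w j * |f (i - j)|)) * |g i| :=
    (hs1.add hs2).mul_right _
  exact Summable.of_nonneg_of_le (fun j => abs_nonneg _) hbound hbsum

lemma summable_Aform (hw0 : ∀ j : ℤ, 0 ≤ w j) (hwsum : Summable w)
    (hf : ∀ i ∉ S, f i = 0) (hg : ∀ i ∉ S, g i = 0) :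
    Summable (Aform w f g) := by
  apply Summable.of_abs
  rw [summable_prod_of_nonneg (fun p => abs_nonneg _)]
  constructor
  · exact fun i => summable_slice_abs hw0 hwsum hf i
  · apply summable_of_ne_finset_zero (s := S)
    intro i hi
    have : ∀ j : ℤ, |Aform w f g (i, j)| = 0 := by
      intro j
      by_cases hj : j = 0 <;> simp [Aform, hj, hg i hi]
    simp [this]

lemma tsum_Aform (hw0 : ∀ j : ℤ, 0 ≤ w j) (hwsum : Summable w)
    (hf : ∀ i ∉ S, f i = 0) (hg : ∀ i ∉ S, g i = 0) :
    ∑' p : ℤ × ℤ, Aform w f g p = ∑ i ∈ S, discLap w f i * g i := by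
  rw [Summable.tsum_prod' (summable_Aform hw0 hwsum hf hg)
    (fun i => (summable_slice_abs hw0 hwsum hf i).of_abs)]
  rw [tsum_eq_sum (s := S) (f := fun i => ∑' j : ℤ, Aform w f g (i, j)) ?_]
  · apply Finset.sum_congr rfl
    intro i _
    have : ∀ j : ℤ, Aform w f g (i, j) = (if j = 0 then 0 else w j * (f i - f (i - j))) * g i := by
      intro j; by_cases hj : j = 0 <;> simp [Aform, hj]
    rw [tsum_congr this, tsum_mul_right, discLap]
  · intro i hi
    have : ∀ j : ℤ, Aform w f g (i, j) = 0 := by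
      intro j; by_cases hj : j = 0 <;> simp [Aform, hj, hg i hi]
    simp [this]

lemma symform_eq (hwsym : ∀ j : ℤ, w (-j) = w j) (p : ℤ × ℤ) :
    symform w f g p = Aform w f g p + Aform w f g (emap p) := by
  obtain ⟨i, j⟩ := p
  by_cases hj : j = 0
  · simp [symform, Aform, emap, hj]
  · have hj' : -j ≠ 0 := by omega
    simp only [symform, Aform, emap, Equiv.coe_fn_mk, hj, hj', if_false,
      show i - j - -j = i by ring, hwsym j]
    ring

lemma summable_symform (hw0 : ∀ j : ℤ, 0 ≤ w j) (hwsym : ∀ j : ℤ, w (-j) = w j)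
    (hwsum : Summable w) (hf : ∀ i ∉ S, f i = 0) (hg : ∀ i ∉ S, g i = 0) :
    Summable (symform w f g) := by
  have hA := summable_Aform hw0 hwsum hf hg
  have hAe : Summable (Aform w f g ∘ emap) := (Equiv.summable_iff emap).2 hA
  exact (hA.add hAe).congr (fun p => (symform_eq hwsym p).symm)

set_option maxHeartbeats 1000000 in
lemma tsum_symform (hw0 : ∀ j : ℤ, 0 ≤ w j) (hwsym : ∀ j : ℤ, w (-j) = w j)
    (hwsum : Summable w) (hf : ∀ i ∉ S, f i = 0) (hg : ∀ i ∉ S, g i = 0) :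
    ∑' p : ℤ × ℤ, symform w f g p = 2 * ∑ i ∈ S, discLap w f i * g i := by
  have hA := summable_Aform hw0 hwsum hf hg
  have hAe : Summable fun p : ℤ × ℤ => Aform w f g (emap p) :=
    (Equiv.summable_iff emap).2 hA
  have h1 : ∑' p : ℤ × ℤ, symform w f g p
      = ∑' p : ℤ × ℤ, (Aform w f g p + Aform w f g (emap p)) :=
    tsum_congr (symform_eq hwsym)
  rw [h1, Summable.tsum_add hA hAe, emap.tsum_eq (Aform w f g), tsum_Aform hw0 hwsum hf hg]
  ring

lemma symform_self_nonneg (hw0 : ∀ j : ℤ, 0 ≤ w j) (p : ℤ × ℤ) :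
    0 ≤ symform w f f p := by
  obtain ⟨i, j⟩ := p
  by_cases hj : j = 0
  · simp [symform, hj]
  · simp only [symform, hj, if_false]
    rw [mul_assoc]
    exact mul_nonneg (hw0 j) (mul_self_nonneg _)

section sums2

variable {w f g g₁ g₂ : ℤ → ℝ} {S : Finset ℤ}

lemma symform_sub (p : ℤ × ℤ) :
    symform w f (fun i => g₁ i - g₂ i) p = symform w f g₁ p - symform w f g₂ p := by
  obtain ⟨i, j⟩ := p
  by_cases hj : j = 0 <;> simp only [symform, hj, if_true, if_false] <;> ring

lemma symform_amgm (hw0 : ∀ j : ℤ, 0 ≤ w j) (p : ℤ × ℤ) :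
    symform w f g p ≤ (symform w f f p + symform w g g p) / 2 := by
  obtain ⟨i, j⟩ := p
  by_cases hj : j = 0
  · simp [symform, hj]
  · simp only [symform, hj, if_false]
    nlinarith [mul_nonneg (hw0 j) (sq_nonneg ((f i - f (i - j)) - (g i - g (i - j))))]

lemma energy_sq {h : ℝ} (hw0 : ∀ j : ℤ, 0 ≤ w j) (hwsym : ∀ j : ℤ, w (-j) = w j)
    (hwsum : Summable w) (hh : 0 < h) (hf : ∀ i ∉ S, f i = 0) :
    energyNorm h w f ^ 2 = h / 2 * ∑' p : ℤ × ℤ, symform w f f p := by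
  have hsym := summable_symform hw0 hwsym hwsum hf hf
  have hslice : ∀ i : ℤ, Summable fun j : ℤ => symform w f f (i, j) :=
    fun i => hsym.prod_factor i
  have hinner : ∀ i : ℤ, (∑' j : ℤ, if j = 0 then 0 else h * w j * (f i - f (i - j)) ^ 2)
      = h * ∑' j : ℤ, symform w f f (i, j) := by
    intro i
    rw [← tsum_mul_left]
    apply tsum_congr; intro j
    by_cases hj : j = 0
    · simp [symform, hj]
    · simp only [symform, hj, if_false]; ring
  have hnn : (0:ℝ) ≤ (1/2 : ℝ) * ∑' i : ℤ, ∑' j : ℤ,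
      (if j = 0 then 0 else h * w j * (f i - f (i - j)) ^ 2) := by
    apply mul_nonneg (by norm_num)
    apply tsum_nonneg; intro i
    apply tsum_nonneg; intro j
    by_cases hj : j = 0
    · simp [hj]
    · simp only [hj, if_false]
      exact mul_nonneg (mul_nonneg hh.le (hw0 j)) (sq_nonneg _)
  rw [energyNorm, Real.sq_sqrt hnn, tsum_congr hinner, tsum_mul_left,
    ← Summable.tsum_prod' hsym hslice]
  ring

end sums2

theorem stmt10 (q Δt h : ℝ) (hq : 1 < q) (hΔt : 0 < Δt) (hh : 0 < h)
    (Mx : ℤ) (hMx : 1 ≤ Mx)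
    (w : ℤ → ℝ) (hw0 : ∀ j : ℤ, 0 ≤ w j) (hwsym : ∀ j : ℤ, w (-j) = w j) (hwsum : Summable w)
    (u0 : ℤ → ℝ) (hu0 : ∀ i : ℤ, Mx < |i| → u0 i = 0)
    (u : ℕ → ℤ → ℝ) (hu : IsFD q Δt w Mx u0 u) :
    (∀ n : ℕ,
      (4 / (q * (q / (q - 1)))) *
          (∑' i : ℤ, h * (opow (u (n + 1) i) (q / 2) - opow (u n i) (q / 2)) ^ 2) / Δt ^ 2 +
        (1 / 2) * ((energyNorm h w (u (n + 1))) ^ 2 - (energyNorm h w (u n)) ^ 2) / Δt ≤ 0) ∧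
    Antitone fun n : ℕ => energyNorm h w (u n) := by
  obtain ⟨hu00, hsupp, hscheme⟩ := hu
  have hq1 : (0:ℝ) < q - 1 := by linarith
  have hq0 : (0:ℝ) < q := by linarith
  have key : ∀ n : ℕ,
      (4 / (q * (q / (q - 1)))) *
          (∑' i : ℤ, h * (opow (u (n + 1) i) (q / 2) - opow (u n i) (q / 2)) ^ 2) / Δt ^ 2 +
        (1 / 2) * ((energyNorm h w (u (n + 1))) ^ 2 - (energyNorm h w (u n)) ^ 2) / Δt ≤ 0 := by
    intro n
    set a : ℤ → ℝ := u (n + 1) with ha_def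
    set b : ℤ → ℝ := u n with hb_def
    set S : Finset ℤ := Finset.Icc (-Mx) Mx with hS
    have hmemS : ∀ i : ℤ, i ∉ S → Mx < |i| := by
      intro i hi
      rw [hS, Finset.mem_Icc, ← abs_le] at hi
      exact not_le.1 hi
    have hSmem : ∀ i : ℤ, i ∈ S → |i| ≤ Mx := by
      intro i hi
      rw [hS, Finset.mem_Icc] at hi
      exact abs_le.2 hi
    have ha : ∀ i ∉ S, a i = 0 := fun i hi => hsupp (n + 1) i (hmemS i hi)
    have hb : ∀ i ∉ S, b i = 0 := fun i hi => hsupp n i (hmemS i hi)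
    set v : ℤ → ℝ := fun i => a i - b i with hv_def
    have hv : ∀ i ∉ S, v i = 0 := by
      intro i hi
      show a i - b i = 0
      rw [ha i hi, hb i hi, sub_zero]
    -- summabilities
    have Ssaa := summable_symform hw0 hwsym hwsum ha ha
    have Ssbb := summable_symform hw0 hwsym hwsum hb hb
    have Ssab := summable_symform hw0 hwsym hwsum ha hb
    -- energies
    have Ea := energy_sq (h := h) hw0 hwsym hwsum hh ha
    have Eb := energy_sq (h := h) hw0 hwsym hwsum hh hb
    set Saa : ℝ := ∑' p : ℤ × ℤ, symform w a a p with hSaa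
    set Sbb : ℝ := ∑' p : ℤ × ℤ, symform w b b p with hSbb
    set Sab : ℝ := ∑' p : ℤ × ℤ, symform w a b p with hSab
    have hab_le : Sab ≤ (Saa + Sbb) / 2 := by
      have h1 := Summable.tsum_le_tsum (fun p => symform_amgm (f := a) (g := b) hw0 p) Ssab
        ((Ssaa.add Ssbb).div_const 2)
      calc Sab ≤ ∑' p : ℤ × ℤ, (symform w a a p + symform w b b p) / 2 := h1
        _ = (Saa + Sbb) / 2 := by rw [tsum_div_const, Summable.tsum_add Ssaa Ssbb]
    -- symmetrization identity for T
    have hTv : ∑' p : ℤ × ℤ, symform w a v p = 2 * ∑ i ∈ S, discLap w a i * v i :=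
      tsum_symform hw0 hwsym hwsum ha hv
    have hsplitv : ∑' p : ℤ × ℤ, symform w a v p = Saa - Sab := by
      have hpt : ∀ p : ℤ × ℤ, symform w a v p = symform w a a p - symform w a b p :=
        fun p => symform_sub p
      rw [tsum_congr hpt, Summable.tsum_sub Ssaa Ssab]
    set T : ℝ := ∑ i ∈ S, discLap w a i * v i with hT
    have hTlow : (Saa - Sbb) / 4 ≤ T := by
      have : T = (Saa - Sab) / 2 := by
        rw [hsplitv] at hTv
        linarith
      rw [this]
      linarith
    -- the scheme identity
    have hzero : ∑ i ∈ S,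
        (h * v i * ((opow (a i) (q - 1) - opow (b i) (q - 1)) / Δt + discLap w a i)) = 0 :=
      Finset.sum_eq_zero fun i hi => by rw [hscheme n i (hSmem i hi)]; ring
    set D : ℝ := ∑ i ∈ S, h * v i * (opow (a i) (q - 1) - opow (b i) (q - 1)) with hD
    have hDT : D / Δt + h * T = 0 := by
      rw [hD, hT, Finset.sum_div, Finset.mul_sum, ← Finset.sum_add_distrib, ← hzero]
      exact Finset.sum_congr rfl fun i _ => by ring
    -- lower bound on D
    set c : ℝ := 4 * (q - 1) / q ^ 2 with hc
    set P : ℝ := ∑ i ∈ S, h * (opow (a i) (q / 2) - opow (b i) (q / 2)) ^ 2 with hP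
    have hPsum : (∑' i : ℤ, h * (opow (a i) (q / 2) - opow (b i) (q / 2)) ^ 2) = P := by
      rw [hP]
      apply tsum_eq_sum
      intro i hi
      rw [ha i hi, hb i hi, opow_zero']
      simp
    have hDlow : c * P ≤ D := by
      rw [hD, hP, Finset.mul_sum]
      apply Finset.sum_le_sum
      intro i _
      have hkg := key_general hq (a i) (b i)
      calc c * (h * (opow (a i) (q / 2) - opow (b i) (q / 2)) ^ 2)
          = h * (4 * (q - 1) / q ^ 2 * (opow (a i) (q / 2) - opow (b i) (q / 2)) ^ 2) := by
            rw [hc]; ring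
        _ ≤ h * ((opow (a i) (q - 1) - opow (b i) (q - 1)) * (a i - b i)) :=
            mul_le_mul_of_nonneg_left hkg hh.le
        _ = h * v i * (opow (a i) (q - 1) - opow (b i) (q - 1)) := by
            show _ = h * (a i - b i) * _
            ring
    -- combine
    have hc' : 4 / (q * (q / (q - 1))) = c := by
      rw [hc]
      field_simp
    have hD_eq : D = -(h * T) * Δt := by
      have h2 : D / Δt = -(h * T) := by linarith
      rw [div_eq_iff hΔt.ne'] at h2
      exact h2
    have h5 : Δt * h * ((Saa - Sbb) / 4) ≤ Δt * h * T :=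
      mul_le_mul_of_nonneg_left hTlow (by positivity)
    have h4 : c * P ≤ -(Δt * h * ((Saa - Sbb) / 4)) := by nlinarith
    rw [hc', hPsum, Ea, Eb]
    have hgoal' : c * P / Δt ^ 2 + 1 / 2 * (h / 2 * Saa - h / 2 * Sbb) / Δt
        = (c * P + Δt * h * ((Saa - Sbb) / 4)) / Δt ^ 2 := by
      field_simp
      ring
    rw [hgoal']
    apply div_nonpos_of_nonpos_of_nonneg _ (sq_nonneg Δt)
    linarith
  refine ⟨key, antitone_nat_of_succ_le ?_⟩
  intro n
  have hk := key n
  have hEnn : ∀ m : ℕ, 0 ≤ energyNorm h w (u m) := fun m => Real.sqrt_nonneg _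
  have hPnn : 0 ≤ ∑' i : ℤ, h * (opow (u (n + 1) i) (q / 2) - opow (u n i) (q / 2)) ^ 2 :=
    tsum_nonneg fun i => by positivity
  have hcnn : (0:ℝ) ≤ 4 / (q * (q / (q - 1))) := by
    apply div_nonneg (by norm_num)
    apply mul_nonneg hq0.le
    exact div_nonneg hq0.le (by linarith)
  have hterm1 : 0 ≤ 4 / (q * (q / (q - 1))) *
      (∑' i : ℤ, h * (opow (u (n + 1) i) (q / 2) - opow (u n i) (q / 2)) ^ 2) / Δt ^ 2 := by
    apply div_nonneg (mul_nonneg hcnn hPnn) (sq_nonneg _)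
  have h6 : 1 / 2 * ((energyNorm h w (u (n + 1))) ^ 2 - (energyNorm h w (u n)) ^ 2) / Δt ≤ 0 := by
    linarith
  rw [div_nonpos_iff] at h6
  have h7 : (energyNorm h w (u (n + 1))) ^ 2 ≤ (energyNorm h w (u n)) ^ 2 := by
    rcases h6 with ⟨_, h6b⟩ | ⟨h6a, _⟩
    · linarith
    · linarith
  calc energyNorm h w (u (n + 1)) = Real.sqrt ((energyNorm h w (u (n + 1))) ^ 2) :=
        (Real.sqrt_sq (hEnn (n + 1))).symm
    _ ≤ Real.sqrt ((energyNorm h w (u n)) ^ 2) := Real.sqrt_le_sqrt h7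
    _ = energyNorm h w (u n) := Real.sqrt_sq (hEnn n)
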